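/- Let σ_w ∈ ℝ with 0 < σ_w² < 2 and let q ∈ ℝ. Then the 3 × 3 Hermitian matrix M(q) with rows [ 1 + σ_w⁴/2 − σ_w² cos q, −(σ_w²/2) e^{−iq}, 1/2 ], [ −(σ_w²/2) e^{iq}, 1, −1/2 ], [ 1/2, −1/2, 3 ] is positive definite; that is, w† M(q) w > 0 for every nonzero w ∈ ℂ³. -/

import Mathlib

set_option maxHeartbeats 1000000

open scoped ComplexOrder

/-- For `0 < σ_w² < 2` and any wavevector `q`, the Fourier-space inverse
covariance matrix `M(q)` of the rectified linear stochastic network on a ring is a positive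
definite Hermitian matrix. -/
theorem relu_ring_fourier_inverse_covariance_posdef
    (σw : ℝ) (hσw : 0 < σw ^ 2) (hσw2 : σw ^ 2 < 2) (q : ℝ)
    (M : Matrix (Fin 3) (Fin 3) ℂ)
    (hM : M = !![1 + (σw : ℂ) ^ 4 / 2 - (σw : ℂ) ^ 2 * Real.cos q,
        -((σw : ℂ) ^ 2 / 2) * Complex.exp (-(q : ℂ) * Complex.I), 1 / 2;
      -((σw : ℂ) ^ 2 / 2) * Complex.exp ((q : ℂ) * Complex.I), 1, -(1 / 2);
      1 / 2, -(1 / 2), 3]) :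
    M.PosDef := by
  subst hM
  set E : ℂ := Complex.exp ((q : ℂ) * Complex.I) with hE
  have hEne : E ≠ 0 := Complex.exp_ne_zero _
  have hE' : Complex.exp (-(q : ℂ) * Complex.I) = E⁻¹ := by
    rw [hE, ← Complex.exp_neg]; ring_nf
  have hconjE : (starRingEnd ℂ) E = E⁻¹ := by
    rw [hE, ← Complex.exp_conj, ← Complex.exp_neg]
    congr 1
    rw [map_mul, Complex.conj_ofReal, Complex.conj_I]
    ring
  have hE2 : Complex.exp (-((q : ℂ) * Complex.I)) = E⁻¹ := by
    rw [hE, ← Complex.exp_neg]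
  have hconjE2 : (starRingEnd ℂ) (Complex.exp (-((q : ℂ) * Complex.I))) = E := by
    rw [hE2, map_inv₀, hconjE, inv_inv]
  have hcos : ((Real.cos q : ℝ) : ℂ) = (E + E⁻¹) / 2 := by
    rw [Complex.ofReal_cos, Complex.cos, hE', hE]
  refine Matrix.PosDef.of_dotProduct_mulVec_pos ?_ ?_
  · ext i j
    fin_cases i <;> fin_cases j <;>
      simp [Matrix.conjTranspose_apply, hE', hE2, hconjE, hconjE2, hcos,
        Complex.conj_ofReal, map_sub, map_add, map_mul, map_div₀, map_pow, map_inv₀] <;>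
      first
      | tauto
      | (left; ring)
  · intro x hx
    set a := x 0
    set b := x 1
    set c := x 2
    set s : ℂ := (σw : ℂ) ^ 2 with hs
    have hconjs : (starRingEnd ℂ) s = s := by
      rw [hs]; simp [Complex.conj_ofReal]
    set u : ℂ := b - s / 2 * E * a - c / 2 with hu
    set v : ℂ := (1 - s / 2 * E) * a + c / 2 with hv
    have key : dotProduct (star x)
        (Matrix.mulVec (!![1 + (σw : ℂ) ^ 4 / 2 - (σw : ℂ) ^ 2 * Real.cos q,
        -((σw : ℂ) ^ 2 / 2) * Complex.exp (-(q : ℂ) * Complex.I), 1 / 2;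
      -((σw : ℂ) ^ 2 / 2) * Complex.exp ((q : ℂ) * Complex.I), 1, -(1 / 2);
      1 / 2, -(1 / 2), 3]) x)
        = (starRingEnd ℂ) u * u + (starRingEnd ℂ) v * v
          + (5 / 2 : ℂ) * ((starRingEnd ℂ) c * c) := by
      simp only [dotProduct, Matrix.mulVec, Fin.sum_univ_three,
        Matrix.cons_val', Matrix.cons_val_zero, Matrix.cons_val_one, Matrix.head_cons,
        Matrix.empty_val', Matrix.cons_val_fin_one, Matrix.head_fin_const,
        Matrix.cons_val_two, Matrix.tail_cons, Pi.star_apply, Complex.star_def, hE', hcos, Matrix.of_apply]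
      rw [hu, hv]
      simp only [map_sub, map_add, map_mul, map_div₀, map_one, map_ofNat, hconjs, hconjE,
        RCLike.star_def]
      have h4 : ((σw : ℂ)) ^ 4 = s ^ 2 := by rw [hs]; ring
      rw [h4, ← hs]
      field_simp
      ring
    rw [key, ← Complex.normSq_eq_conj_mul_self, ← Complex.normSq_eq_conj_mul_self, ← Complex.normSq_eq_conj_mul_self]
    have : ((Complex.normSq u : ℝ) : ℂ) + ((Complex.normSq v : ℝ) : ℂ)
        + (5 / 2 : ℂ) * ((Complex.normSq c : ℝ) : ℂ)
        = ((Complex.normSq u + Complex.normSq v + 5 / 2 * Complex.normSq c : ℝ) : ℂ) := by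
      push_cast; ring
    rw [this, Complex.zero_lt_real]
    -- now real positivity
    by_contra hle
    push_neg at hle
    have h1 : Complex.normSq u = 0 ∧ Complex.normSq v = 0 ∧ Complex.normSq c = 0 := by
      have := Complex.normSq_nonneg u
      have := Complex.normSq_nonneg v
      have := Complex.normSq_nonneg c
      constructor
      · linarith
      constructor <;> linarith
    obtain ⟨h1u, h1v, h1c⟩ := h1
    rw [Complex.normSq_eq_zero] at h1u h1v h1c
    have hc0 : c = 0 := h1c
    have hRne : (1 - s / 2 * E) ≠ 0 := by
      intro h
      have habs : ‖s / 2 * E‖ = 1 := by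
        have : s / 2 * E = 1 := by linear_combination -h
        rw [this]; simp
      rw [norm_mul] at habs
      have hEabs : ‖E‖ = 1 := by
        rw [hE]; exact Complex.norm_exp_ofReal_mul_I q
      rw [hEabs, mul_one] at habs
      have : ‖s / 2‖ = σw ^ 2 / 2 := by
        rw [hs]
        rw [show ((σw : ℂ) ^ 2 / 2) = ((σw ^ 2 / 2 : ℝ) : ℂ) by push_cast; ring]
        rw [Complex.norm_real, Real.norm_eq_abs, abs_of_pos (by linarith)]
      rw [this] at habs
      linarith
    have ha0 : a = 0 := by
      rw [hv, hc0] at h1v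
      simpa [hRne] using h1v
    have hb0 : b = 0 := by
      rw [hu, ha0, hc0] at h1u
      simpa using h1u
    apply hx
    funext i
    fin_cases i
    · exact ha0
    · exact hb0
    · exact hc0
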